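/- Let G be an arbitrary marked digraph. Then every set Λ ⊆ V for which some control of Λ yields a marked digraph satisfying both Property P1 and Property P2 has cardinality at least |M̄_G| + |S²_G|; that is, N*_G ≥ |M̄_G| + |S²_G|. -/

import Mathlib

/-- `u` is the unique in-neighbor of `w` in the digraph with edge relation `E`. -/
def UniqueInNbr {V : Type*} (E : V → V → Prop) (u w : V) : Prop :=
  E u w ∧ ∀ u', E u' w → u' = u

/-- Property P1: every simple (non-marked) vertex `v` has some vertex `v'`
whose unique in-neighbor is `v`. -/
def SatisfiesP1 {V : Type*} (E : V → V → Prop) (O : Set V) : Prop :=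
  ∀ v, v ∉ O → ∃ v', UniqueInNbr E v v'

/-- A directed (simple) cycle of length `m + 1`, given by an injective cyclic
sequence of vertices with consecutive edges (indices mod `m + 1`). -/
def IsCycle {V : Type*} (E : V → V → Prop) {m : ℕ} (c : Fin (m + 1) → V) : Prop :=
  Function.Injective c ∧ ∀ j, E (c j) (c (j + 1))

/-- A cycle `c` satisfies Property P2 if some vertex `v` off the cycle has a
vertex of the cycle as its unique in-neighbor. -/
def CycleSatisfiesP2 {V : Type*} (E : V → V → Prop) {m : ℕ} (c : Fin (m + 1) → V) : Prop :=
  ∃ v, (∀ j, c j ≠ v) ∧ ∃ j, UniqueInNbr E (c j) v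

/-- Property P2: every directed cycle consisting entirely of simple vertices
satisfies Property P2. -/
def SatisfiesP2 {V : Type*} (E : V → V → Prop) (O : Set V) : Prop :=
  ∀ (m : ℕ) (c : Fin (m + 1) → V), IsCycle E c → (∀ j, c j ∉ O) → CycleSatisfiesP2 E c


/-- `Ehat` is obtained from `E` by controlling the vertices of `Λ`: every
vertex not in `Λ` keeps exactly the same in-neighbors. -/
def Control {V : Type*} (E Ehat : V → V → Prop) (Λ : Set V) : Prop :=
  ∀ w, w ∉ Λ → ∀ u, Ehat u w ↔ E u w

/-- `Mbar E O` is the set of simple vertices that do not satisfy Property P1. -/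
def Mbar {V : Type*} (E : V → V → Prop) (O : Set V) : Set V :=
  {v | v ∉ O ∧ ¬ ∃ w, UniqueInNbr E v w}

/-- A digraph is acyclic if it contains no directed cycle. -/
def Acyclic {V : Type*} (E : V → V → Prop) : Prop :=
  ¬ ∃ (m : ℕ) (c : Fin (m + 1) → V), IsCycle E c


/-- An observed-path-compatible cycle (OP-CC): a directed cycle in which each
vertex is the unique in-neighbor of its successor (indices taken cyclically). -/
def IsOPCC {V : Type*} (E : V → V → Prop) {m : ℕ} (c : Fin (m + 1) → V) : Prop :=
  Function.Injective c ∧ ∀ j, UniqueInNbr E (c j) (c (j + 1))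

/-- `S2 E O` is the collection of (vertex sets of) OP-CCs consisting entirely
of simple vertices that do not satisfy Property P2. -/
def S2 {V : Type*} (E : V → V → Prop) (O : Set V) : Set (Set V) :=
  {S | ∃ (m : ℕ) (c : Fin (m + 1) → V),
        IsOPCC E c ∧ (∀ j, c j ∉ O) ∧ ¬ CycleSatisfiesP2 E c ∧ Set.range c = S}


/-- The unique in-neighbor of a vertex is unique. -/
lemma uniq_eq {V : Type*} {E : V → V → Prop} {p q w : V}
    (hp : UniqueInNbr E p w) (hq : UniqueInNbr E q w) : q = p :=
  hp.2 q hq.1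

/-- Unique in-neighborhood is preserved at uncontrolled vertices. -/
lemma ctrl_uniq {V : Type*} {E Ehat : V → V → Prop} {Λ : Set V}
    (hctrl : Control E Ehat Λ) {u w : V} (hw : w ∉ Λ) :
    UniqueInNbr Ehat u w ↔ UniqueInNbr E u w := by
  constructor
  · rintro ⟨h1, h2⟩
    exact ⟨(hctrl w hw u).1 h1, fun u' h => h2 u' ((hctrl w hw u').2 h)⟩
  · rintro ⟨h1, h2⟩
    exact ⟨(hctrl w hw u).2 h1, fun u' h => h2 u' ((hctrl w hw u').1 h)⟩

open scoped Fin.CommRing in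
/-- Two OP-CCs sharing a vertex have the same vertex set (one inclusion). -/
lemma opcc_range_subset {V : Type*} {E : V → V → Prop} {m m' : ℕ}
    {c : Fin (m+1) → V} {c' : Fin (m'+1) → V}
    (hc : ∀ j, UniqueInNbr E (c j) (c (j+1)))
    (hc' : ∀ j, UniqueInNbr E (c' j) (c' (j+1)))
    {a : Fin (m+1)} {b : Fin (m'+1)} (hab : c a = c' b) :
    Set.range c ⊆ Set.range c' := by
  have key : ∀ t : ℕ, c (a - (t : Fin (m+1))) = c' (b - (t : Fin (m'+1))) := by
    intro t
    induction t with
    | zero => simpa using hab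
    | succ t ih =>
      have e1 : a - ((t+1 : ℕ) : Fin (m+1)) = a - (t : Fin (m+1)) - 1 := by
        push_cast; ring
      have e2 : b - ((t+1 : ℕ) : Fin (m'+1)) = b - (t : Fin (m'+1)) - 1 := by
        push_cast; ring
      rw [e1, e2]
      have h1 := hc (a - (t : Fin (m+1)) - 1)
      have h2 := hc' (b - (t : Fin (m'+1)) - 1)
      have hx : a - (t : Fin (m+1)) - 1 + 1 = a - (t : Fin (m+1)) := by ring
      have hx' : b - (t : Fin (m'+1)) - 1 + 1 = b - (t : Fin (m'+1)) := by ring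
      rw [hx] at h1
      rw [hx'] at h2
      rw [ih] at h1
      exact uniq_eq h2 h1
  rintro _ ⟨j, rfl⟩
  have h := key (a - j).val
  have hj : a - (((a - j).val : ℕ) : Fin (m+1)) = j := by
    rw [Fin.cast_val_eq_self]; ring
  rw [hj] at h
  exact ⟨_, h.symm⟩

/-- Two members of `S2` sharing a vertex are equal. -/
lemma S2_eq_of_mem {V : Type*} {E : V → V → Prop} {O : Set V} {S S' : Set V}
    (hS : S ∈ S2 E O) (hS' : S' ∈ S2 E O) {x : V} (hx : x ∈ S) (hx' : x ∈ S') :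
    S = S' := by
  obtain ⟨m, c, ⟨_, hc⟩, -, -, rfl⟩ := hS
  obtain ⟨m', c', ⟨_, hc'⟩, -, -, rfl⟩ := hS'
  obtain ⟨a, rfl⟩ := hx
  obtain ⟨b, hb⟩ := hx'
  exact le_antisymm (opcc_range_subset hc hc' hb.symm) (opcc_range_subset hc' hc hb)

/-- Vertices of an OP-CC satisfy Property P1, hence lie outside `Mbar`. -/
lemma not_mem_Mbar_of_mem_S2 {V : Type*} {E : V → V → Prop} {O : Set V} {S : Set V}
    (hS : S ∈ S2 E O) {x : V} (hx : x ∈ S) : x ∉ Mbar E O := by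
  obtain ⟨m, c, ⟨-, hc⟩, -, -, rfl⟩ := hS
  obtain ⟨j, rfl⟩ := hx
  rintro ⟨-, hno⟩
  exact hno ⟨c (j+1), hc j⟩

open scoped Fin.CommRing in
/-- For every `S ∈ S2`, some vertex of `S` is the unique in-neighbor (in the
controlled digraph) of some vertex of `Λ`. -/
lemma S2_exists_witness {V : Type*} {E Ehat : V → V → Prop} {O Λ : Set V}
    (hctrl : Control E Ehat Λ) (hP1 : SatisfiesP1 Ehat O) (hP2 : SatisfiesP2 Ehat O)
    {S : Set V} (hS : S ∈ S2 E O) :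
    ∃ u w, u ∈ S ∧ w ∈ Λ ∧ UniqueInNbr Ehat u w := by
  obtain ⟨m, c, ⟨hinj, hc⟩, hsimple, hnP2, rfl⟩ := hS
  by_cases hcase : ∃ j w, w ∈ Λ ∧ UniqueInNbr Ehat (c j) w
  · obtain ⟨j, w, hwΛ, hw⟩ := hcase
    exact ⟨c j, w, ⟨j, rfl⟩, hwΛ, hw⟩
  push_neg at hcase
  exfalso
  have hstep : ∀ j, UniqueInNbr Ehat (c j) (c (j+1)) := by
    intro j
    obtain ⟨w, hw⟩ := hP1 (c j) (hsimple j)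
    have hwΛ : w ∉ Λ := fun h => hcase j w h hw
    have hwE : UniqueInNbr E (c j) w := (ctrl_uniq hctrl hwΛ).1 hw
    have hon : ∃ j', c j' = w := by
      by_contra hoff
      push_neg at hoff
      exact hnP2 ⟨w, hoff, j, hwE⟩
    obtain ⟨j', rfl⟩ := hon
    have h2 := hc (j' - 1)
    have hx : j' - 1 + 1 = j' := by ring
    rw [hx] at h2
    have h3 : c (j' - 1) = c j := hwE.2 _ h2.1
    have h4 : j' = j + 1 := by
      have := hinj h3
      rw [← this]; ring
    rwa [h4] at hw
  obtain ⟨v, hvoff, j, hv⟩ := hP2 m c ⟨hinj, fun j => (hstep j).1⟩ hsimple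
  have hvΛ : v ∉ Λ := fun h => hcase j v h hv
  exact hnP2 ⟨v, hvoff, j, (ctrl_uniq hctrl hvΛ).1 hv⟩

/-- For an arbitrary marked digraph, every controlled set whose control yields
a marked digraph satisfying Properties P1 and P2 has cardinality at least
`|M̄_G| + |S²_G|`. -/
theorem card_controlled_ge_Mbar_add_S2 {V : Type*} [Fintype V]
    (E : V → V → Prop) (O : Set V)
    (Λ : Set V) (Ehat : V → V → Prop)
    (hctrl : Control E Ehat Λ)
    (hP1 : SatisfiesP1 Ehat O) (hP2 : SatisfiesP2 Ehat O) :
    (Mbar E O).ncard + (S2 E O).ncard ≤ Λ.ncard := by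
  classical
  have hMw : ∀ v : (Mbar E O), ∃ w : Λ, UniqueInNbr Ehat v w := by
    rintro ⟨v, hvO, hvn⟩
    obtain ⟨w, hw⟩ := hP1 v hvO
    have hwΛ : w ∈ Λ := by
      by_contra h
      exact hvn ⟨w, (ctrl_uniq hctrl h).1 hw⟩
    exact ⟨⟨w, hwΛ⟩, hw⟩
  choose fM hfM using hMw
  have hSw : ∀ S : (S2 E O), ∃ (u : V) (w : Λ),
      u ∈ (S : Set V) ∧ UniqueInNbr Ehat u w := by
    rintro ⟨S, hS⟩
    obtain ⟨u, w, hu, hwΛ, hw⟩ := S2_exists_witness hctrl hP1 hP2 hS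
    exact ⟨u, ⟨w, hwΛ⟩, hu, hw⟩
  choose uS wS hmem huniq using hSw
  have hFinj : Function.Injective (Sum.elim fM wS : (Mbar E O) ⊕ (S2 E O) → Λ) := by
    rintro (v | S) (v' | S') h <;> simp only [Sum.elim_inl, Sum.elim_inr] at h
    · have h1 := hfM v
      rw [h] at h1
      exact congrArg Sum.inl (Subtype.ext (uniq_eq (hfM v') h1))
    · have h1 := hfM v
      rw [h] at h1
      have hvu : (v : V) = uS S' := uniq_eq (huniq S') h1
      exact absurd (hvu ▸ v.2) (not_mem_Mbar_of_mem_S2 S'.2 (hmem S'))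
    · have h1 := huniq S
      rw [h] at h1
      have hvu : uS S = (v' : V) := uniq_eq (hfM v') h1
      exact absurd (hvu ▸ (hmem S)) (fun hx => not_mem_Mbar_of_mem_S2 S.2 (hvu ▸ hmem S) v'.2)
    · have h1 := huniq S
      rw [h] at h1
      have hu : uS S = uS S' := uniq_eq (huniq S') h1
      have : (S : Set V) = S' := S2_eq_of_mem S.2 S'.2 (hmem S) (hu ▸ hmem S')
      exact congrArg Sum.inr (Subtype.ext this)
  have hle := Nat.card_le_card_of_injective _ hFinj
  rwa [Nat.card_sum, Nat.card_coe_set_eq, Nat.card_coe_set_eq,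
    Nat.card_coe_set_eq] at hle
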